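/- Under the random-intercept crossed effects design with K ≥ 2, for distinct factors k ≠ h let B_{k,h} be the simple bipartite graph whose vertices are the levels of factors k and h, with an edge between (k,g) and (h,g′) if and only if there is an observation i with g_k[i] = g and g_h[i] = g′. Fix any permutation π of {1,…,K} and, for ℓ = 1,…,K−1, let C_ℓ be the number of connected components of B_{π(ℓ),π(ℓ+1)}. Then the kernel of U^(r) has dimension at least ∑_{ℓ=1}^{K−1} C_ℓ; equivalently, the symmetric matrix Ā^(r) has the eigenvalue −1/(K−1) with multiplicity at least ∑_{ℓ=1}^{K−1} C_ℓ. -/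

import Mathlib

open Matrix

namespace Crossed

/-- Coordinates of the random effects: `⟨k, a⟩` is level `a` of factor `k`. -/
abbrev Lvl (K : ℕ) (G : Fin K → ℕ) := Σ k : Fin K, Fin (G k)

/-- The restricted design matrix `V^(r)`. -/
noncomputable def Vr (K N : ℕ) (G : Fin K → ℕ) (g : Fin N → ∀ k : Fin K, Fin (G k)) :
    Matrix (Fin N) (Lvl K G) ℝ :=
  fun i s => if g i s.1 = s.2 then 1 else 0

/-- `U^(r) = (V^(r))ᵀ V^(r)`. -/
noncomputable def Ur (K N : ℕ) (G : Fin K → ℕ) (g : Fin N → ∀ k : Fin K, Fin (G k)) :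
    Matrix (Lvl K G) (Lvl K G) ℝ :=
  (Vr K N G g)ᵀ * Vr K N G g

/-- `A^(r) = U^(r) − Diag(U^(r))`. -/
noncomputable def Ar (K N : ℕ) (G : Fin K → ℕ) (g : Fin N → ∀ k : Fin K, Fin (G k)) :
    Matrix (Lvl K G) (Lvl K G) ℝ :=
  Ur K N G g - diagonal (fun c => Ur K N G g c c)

/-- `Ā^(r) = (D^(r))^{−1/2} A^(r) (D^(r))^{−1/2}` with `D^(r) = (K−1)·Diag(U^(r))`. -/
noncomputable def Abar (K N : ℕ) (G : Fin K → ℕ) (g : Fin N → ∀ k : Fin K, Fin (G k)) :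
    Matrix (Lvl K G) (Lvl K G) ℝ :=
  diagonal (fun c => (Real.sqrt (((K : ℝ) - 1) * Ur K N G g c c))⁻¹) * Ar K N G g *
    diagonal (fun c => (Real.sqrt (((K : ℝ) - 1) * Ur K N G g c c))⁻¹)

/-- The adjacency relation of the bipartite graph between the levels of factors `k`
and `h`: `(k,a)` and `(h,b)` are connected iff they are observed together. -/
def BipRel (K N : ℕ) (G : Fin K → ℕ) (g : Fin N → ∀ k : Fin K, Fin (G k))
    (k h : Fin K) : (Fin (G k) ⊕ Fin (G h)) → (Fin (G k) ⊕ Fin (G h)) → Prop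
  | Sum.inl a, Sum.inr b => ∃ i, g i k = a ∧ g i h = b
  | Sum.inr b, Sum.inl a => ∃ i, g i k = a ∧ g i h = b
  | _, _ => False

/-- The bipartite graph `B_{k,h}` between the levels of factors `k` and `h`. -/
def BipGraph (K N : ℕ) (G : Fin K → ℕ) (g : Fin N → ∀ k : Fin K, Fin (G k))
    (k h : Fin K) : SimpleGraph (Fin (G k) ⊕ Fin (G h)) where
  Adj := BipRel K N G g k h
  symm := by
    constructor
    intro x y hxy
    cases x <;> cases y <;> simpa [BipRel] using hxy
  loopless := by
    constructor
    intro x hx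
    cases x <;> simpa [BipRel] using hx

section Proof

attribute [local instance] Classical.propDecidable

variable (K N : ℕ) (G : Fin K → ℕ) (g : Fin N → ∀ k : Fin K, Fin (G k))
  (π : Equiv.Perm (Fin K))

def kι (l : Fin (K-1)) : Fin K := ⟨l.val, lt_of_lt_of_le l.isLt (Nat.sub_le K 1)⟩
def hι (l : Fin (K-1)) : Fin K := ⟨l.val + 1, Nat.add_lt_of_lt_sub l.isLt⟩

abbrev Bl (l : Fin (K-1)) := BipGraph K N G g (π (kι K l)) (π (hι K l))

lemma kι_ne_hι (l : Fin (K-1)) : kι K l ≠ hι K l := by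
  simp [kι, hι, Fin.ext_iff]

noncomputable def wv (l : Fin (K-1)) (c : (Bl K N G g π l).ConnectedComponent) :
    Lvl K G → ℝ := fun s =>
  (if h : s.1 = π (kι K l) then
      (if (Bl K N G g π l).connectedComponentMk
          (Sum.inl (Fin.cast (congrArg G h) s.2)) = c then (1:ℝ) else 0)
    else 0)
  - (if h : s.1 = π (hι K l) then
      (if (Bl K N G g π l).connectedComponentMk
          (Sum.inr (Fin.cast (congrArg G h) s.2)) = c then (1:ℝ) else 0)
    else 0)

lemma wv_apply_k (l : Fin (K-1)) (c : (Bl K N G g π l).ConnectedComponent)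
    (a : Fin (G (π (kι K l)))) :
    wv K N G g π l c ⟨π (kι K l), a⟩ =
      (if (Bl K N G g π l).connectedComponentMk (Sum.inl a) = c then (1:ℝ) else 0) := by
  have hne : π (kι K l) ≠ π (hι K l) := fun h => kι_ne_hι K l (π.injective h)
  simp [wv, dif_pos rfl, dif_neg hne, Fin.cast_refl]
  exact fun h => absurd h (kι_ne_hι K l)

lemma wv_apply_h (l : Fin (K-1)) (c : (Bl K N G g π l).ConnectedComponent)
    (b : Fin (G (π (hι K l)))) :
    wv K N G g π l c ⟨π (hι K l), b⟩ =
      -(if (Bl K N G g π l).connectedComponentMk (Sum.inr b) = c then (1:ℝ) else 0) := by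
  have hne : π (hι K l) ≠ π (kι K l) := fun h => kι_ne_hι K l (π.injective h.symm)
  simp [wv, dif_pos rfl, dif_neg hne, Fin.cast_refl]
  exact fun h => absurd h.symm (kι_ne_hι K l)

lemma wv_apply_ne (l : Fin (K-1)) (c : (Bl K N G g π l).ConnectedComponent)
    (s : Lvl K G) (h1 : s.1 ≠ π (kι K l)) (h2 : s.1 ≠ π (hι K l)) :
    wv K N G g π l c s = 0 := by
  simp [wv, dif_neg h1, dif_neg h2]

lemma mulVec_Vr (v : Lvl K G → ℝ) (i : Fin N) :
    (Vr K N G g).mulVec v i = ∑ k : Fin K, v ⟨k, g i k⟩ := by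
  simp only [Matrix.mulVec, dotProduct, Vr]
  rw [← Finset.univ_sigma_univ, Finset.sum_sigma]
  refine Finset.sum_congr rfl fun k _ => ?_
  simp [ite_mul, eq_comm]


lemma Vr_mulVec_wv (l : Fin (K-1)) (c : (Bl K N G g π l).ConnectedComponent) :
    (Vr K N G g).mulVec (wv K N G g π l c) = 0 := by
  funext i
  rw [mulVec_Vr]
  have hrw : ∀ k : Fin K, wv K N G g π l c ⟨k, g i k⟩ =
      (if h : k = π (kι K l) then
        (if (Bl K N G g π l).connectedComponentMk
            (Sum.inl (Fin.cast (congrArg G h) (g i k))) = c then (1:ℝ) else 0)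
       else 0)
      - (if h : k = π (hι K l) then
        (if (Bl K N G g π l).connectedComponentMk
            (Sum.inr (Fin.cast (congrArg G h) (g i k))) = c then (1:ℝ) else 0)
       else 0) := fun k => rfl
  simp only [hrw, Finset.sum_sub_distrib, Finset.sum_dite_eq', Finset.mem_univ, if_true]
  have hadj : (Bl K N G g π l).Adj (Sum.inl (g i (π (kι K l))))
      (Sum.inr (g i (π (hι K l)))) := ⟨i, rfl, rfl⟩
  have hcc := SimpleGraph.ConnectedComponent.sound hadj.reachable
  simp [Fin.cast_refl, hcc]

lemma wv_mem_ker (l : Fin (K-1)) (c : (Bl K N G g π l).ConnectedComponent) :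
    wv K N G g π l c ∈ LinearMap.ker (Ur K N G g).mulVecLin := by
  rw [LinearMap.mem_ker]
  show (Ur K N G g).mulVec _ = 0
  rw [Ur, ← Matrix.mulVec_mulVec, Vr_mulVec_wv, Matrix.mulVec_zero]

/-- Every connected component contains a left vertex, given that every level is observed. -/
lemma exists_inl (hobs : ∀ (k : Fin K) (a : Fin (G k)), ∃ i, g i k = a)
    (l : Fin (K-1)) (c : (Bl K N G g π l).ConnectedComponent) :
    ∃ a, (Bl K N G g π l).connectedComponentMk (Sum.inl a) = c := by
  obtain ⟨v, hv⟩ := c.exists_rep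
  cases v with
  | inl a => exact ⟨a, hv⟩
  | inr b =>
    obtain ⟨i, hi⟩ := hobs (π (hι K l)) b
    refine ⟨g i (π (kι K l)), ?_⟩
    rw [← hv]
    exact SimpleGraph.ConnectedComponent.sound (SimpleGraph.Adj.reachable ⟨i, rfl, hi⟩)

lemma wv_linearIndependent (hobs : ∀ (k : Fin K) (a : Fin (G k)), ∃ i, g i k = a) :
    LinearIndependent ℝ
      (fun p : Σ l : Fin (K-1), (Bl K N G g π l).ConnectedComponent =>
        wv K N G g π p.1 p.2) := by
  classical
  haveI : ∀ l : Fin (K-1), Fintype ((Bl K N G g π l).ConnectedComponent) :=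
    fun l => Fintype.ofFinite _
  rw [Fintype.linearIndependent_iff]
  intro f hf
  -- key step: for every l and every level a of factor π (kι l), evaluating the
  -- relation at ⟨π (kι l), a⟩ gives f (l, component of a) = 0, once we know all
  -- coefficients for smaller l vanish.
  have main : ∀ n : ℕ, ∀ l : Fin (K-1), l.val = n →
      ∀ c : (Bl K N G g π l).ConnectedComponent, f ⟨l, c⟩ = 0 := by
    intro n
    induction n using Nat.strong_induction_on with
    | _ n IH =>
      intro l hl c
      obtain ⟨a, ha⟩ := exists_inl K N G g π hobs l c
      have heval := congrFun hf ⟨π (kι K l), a⟩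
      rw [Finset.sum_apply] at heval
      simp only [Pi.smul_apply, smul_eq_mul, Pi.zero_apply] at heval
      rw [← Finset.univ_sigma_univ, Finset.sum_sigma] at heval
      have hsum : ∀ l' : Fin (K-1), l' ≠ l →
          (∑ c' : (Bl K N G g π l').ConnectedComponent,
            f ⟨l', c'⟩ * wv K N G g π l' c' ⟨π (kι K l), a⟩) = 0 := by
        intro l' hne
        rcases lt_or_ge l'.val l.val with hlt | hge
        · refine Finset.sum_eq_zero fun c' _ => ?_
          rw [IH l'.val (hl ▸ hlt) l' rfl c', zero_mul]
        · refine Finset.sum_eq_zero fun c' _ => ?_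
          rw [wv_apply_ne, mul_zero]
          · intro h
            exact hne (by
              have := π.injective h.symm
              exact Fin.ext (by simpa [kι, Fin.ext_iff] using this))
          · intro h
            have := π.injective h.symm
            have hv : l'.val + 1 = l.val := by simpa [kι, hι, Fin.ext_iff] using this
            omega
      rw [Finset.sum_eq_single l (fun l' _ h => hsum l' h) (by simp)] at heval
      have hterm : ∀ c' : (Bl K N G g π l).ConnectedComponent,
          f ⟨l, c'⟩ * wv K N G g π l c' ⟨π (kι K l), a⟩ =
          if (Bl K N G g π l).connectedComponentMk (Sum.inl a) = c' then f ⟨l, c'⟩ else 0 := by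
        intro c'
        rw [wv_apply_k]
        split <;> simp
      rw [Finset.sum_congr rfl (fun c' _ => hterm c'), Finset.sum_ite_eq] at heval
      simpa [ha] using heval
  intro p
  exact main p.1.val p.1 rfl p.2


lemma card_le_finrank_ker (hobs : ∀ (k : Fin K) (a : Fin (G k)), ∃ i, g i k = a) :
    (∑ l : Fin (K-1), Nat.card ((Bl K N G g π l).ConnectedComponent))
      ≤ Module.finrank ℝ ↥(LinearMap.ker (Ur K N G g).mulVecLin) := by
  classical
  haveI : ∀ l : Fin (K-1), Fintype ((Bl K N G g π l).ConnectedComponent) :=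
    fun l => Fintype.ofFinite _
  set S := LinearMap.ker (Ur K N G g).mulVecLin with hS
  have hli := wv_linearIndependent K N G g π hobs
  have hmem : ∀ p : Σ l : Fin (K-1), (Bl K N G g π l).ConnectedComponent,
      wv K N G g π p.1 p.2 ∈ S := fun p => wv_mem_ker K N G g π p.1 p.2
  have hli' : LinearIndependent ℝ
      (fun p : Σ l : Fin (K-1), (Bl K N G g π l).ConnectedComponent =>
        (⟨wv K N G g π p.1 p.2, hmem p⟩ : S)) :=
    LinearIndependent.of_comp S.subtype hli
  have hcard := hli'.fintype_card_le_finrank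
  calc (∑ l : Fin (K-1), Nat.card ((Bl K N G g π l).ConnectedComponent))
      = Fintype.card (Σ l : Fin (K-1), (Bl K N G g π l).ConnectedComponent) := by
        rw [Fintype.card_sigma]
        exact Finset.sum_congr rfl fun l _ => Nat.card_eq_fintype_card
    _ ≤ Module.finrank ℝ S := hcard

lemma Ur_diag_pos (hobs : ∀ (k : Fin K) (a : Fin (G k)), ∃ i, g i k = a)
    (c : Lvl K G) : 0 < Ur K N G g c c := by
  obtain ⟨i, hi⟩ := hobs c.1 c.2
  rw [Ur, Matrix.mul_apply]
  refine Finset.sum_pos' (fun j _ => ?_) ⟨i, Finset.mem_univ i, ?_⟩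
  · exact mul_self_nonneg _
  · simp [Vr, hi, Matrix.transpose_apply]

lemma sqrt_pos (hK : 2 ≤ K) (hobs : ∀ (k : Fin K) (a : Fin (G k)), ∃ i, g i k = a)
    (c : Lvl K G) : 0 < Real.sqrt (((K : ℝ) - 1) * Ur K N G g c c) := by
  apply Real.sqrt_pos.mpr
  have h1 : (1:ℝ) ≤ (K:ℝ) - 1 := by
    have : (2:ℝ) ≤ (K:ℝ) := by exact_mod_cast hK
    linarith
  have := Ur_diag_pos K N G g hobs c
  nlinarith

lemma smul_mem_eigenspace (hK : 2 ≤ K)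
    (hobs : ∀ (k : Fin K) (a : Fin (G k)), ∃ i, g i k = a)
    (x : Lvl K G → ℝ) (hx : x ∈ LinearMap.ker (Ur K N G g).mulVecLin) :
    (Matrix.diagonal (fun c => Real.sqrt (((K : ℝ) - 1) * Ur K N G g c c))).mulVec x
      ∈ Module.End.eigenspace (Abar K N G g).mulVecLin (-1 / ((K : ℝ) - 1)) := by
  rw [Module.End.mem_eigenspace_iff]
  have hUx : (Ur K N G g).mulVec x = 0 := hx
  have hK1 : (0:ℝ) < (K:ℝ) - 1 := by
    have : (2:ℝ) ≤ (K:ℝ) := by exact_mod_cast hK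
    linarith
  have hdpos : ∀ c, 0 < Real.sqrt (((K : ℝ) - 1) * Ur K N G g c c) :=
    sqrt_pos K N G g hK hobs
  have hd2 : ∀ c, Real.sqrt (((K : ℝ) - 1) * Ur K N G g c c) *
      Real.sqrt (((K : ℝ) - 1) * Ur K N G g c c) = ((K : ℝ) - 1) * Ur K N G g c c :=
    fun c => Real.mul_self_sqrt (le_of_lt (mul_pos hK1 (Ur_diag_pos K N G g hobs c)))
  show (Abar K N G g).mulVec
      (Matrix.diagonal (fun c => Real.sqrt (((K : ℝ) - 1) * Ur K N G g c c)) *ᵥ x) = _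
  funext c
  have hinner : Matrix.diagonal (fun c => (Real.sqrt (((K : ℝ) - 1) * Ur K N G g c c))⁻¹) *ᵥ
      (Matrix.diagonal (fun c => Real.sqrt (((K : ℝ) - 1) * Ur K N G g c c)) *ᵥ x) = x := by
    funext c'
    rw [Matrix.mulVec_diagonal, Matrix.mulVec_diagonal]
    exact inv_mul_cancel_left₀ (ne_of_gt (hdpos c')) _
  have hAr : (Ar K N G g).mulVec x =
      fun c' => -(Ur K N G g c' c' * x c') := by
    rw [Ar, Matrix.sub_mulVec, hUx]
    funext c'
    simp [Matrix.mulVec_diagonal]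
  rw [Abar, ← Matrix.mulVec_mulVec, ← Matrix.mulVec_mulVec, hinner, hAr]
  rw [Matrix.mulVec_diagonal]
  rw [Pi.smul_apply, Matrix.mulVec_diagonal, smul_eq_mul]
  have hdne : Real.sqrt (((K : ℝ) - 1) * Ur K N G g c c) ≠ 0 := ne_of_gt (hdpos c)
  have hKne : ((K:ℝ) - 1) ≠ 0 := ne_of_gt hK1
  have key : (Real.sqrt (((K : ℝ) - 1) * Ur K N G g c c))⁻¹ * Ur K N G g c c =
      Real.sqrt (((K : ℝ) - 1) * Ur K N G g c c) / ((K:ℝ) - 1) := by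
    rw [eq_div_iff hKne, inv_mul_eq_div, div_mul_eq_mul_div, div_eq_iff hdne]
    linear_combination (hd2 c).symm
  linear_combination (-(x c)) * key

lemma finrank_ker_le_finrank_eigen (hK : 2 ≤ K)
    (hobs : ∀ (k : Fin K) (a : Fin (G k)), ∃ i, g i k = a) :
    Module.finrank ℝ ↥(LinearMap.ker (Ur K N G g).mulVecLin)
      ≤ Module.finrank ℝ
          ↥(Module.End.eigenspace (Abar K N G g).mulVecLin (-1 / ((K : ℝ) - 1))) := by
  classical
  set S := LinearMap.ker (Ur K N G g).mulVecLin
  set E := Module.End.eigenspace (Abar K N G g).mulVecLin (-1 / ((K : ℝ) - 1))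
  set D := Matrix.diagonal (fun c => Real.sqrt (((K : ℝ) - 1) * Ur K N G g c c))
  have hmem : ∀ y : S, D.mulVecLin ((S.subtype) y) ∈ E := fun ⟨x, hx⟩ =>
    smul_mem_eigenspace K N G g hK hobs x hx
  let φ : S →ₗ[ℝ] E := LinearMap.codRestrict E (D.mulVecLin.comp S.subtype) hmem
  have hDinj : Function.Injective D.mulVecLin := by
    intro u v huv
    funext c
    have := congrFun huv c
    simp only [Matrix.mulVecLin_apply, D, Matrix.mulVec_diagonal] at this
    have hdne : Real.sqrt (((K : ℝ) - 1) * Ur K N G g c c) ≠ 0 :=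
      ne_of_gt (sqrt_pos K N G g hK hobs c)
    exact mul_left_cancel₀ hdne this
  have hinj : Function.Injective φ := by
    intro u v huv
    exact Subtype.ext (hDinj (congrArg Subtype.val huv))
  exact LinearMap.finrank_le_finrank_of_injective hinj

end Proof

/-- Theorem 6 of the paper: for any permutation `π` of the factors, the kernel of
`U^(r)` has dimension at least `∑_{ℓ=1}^{K−1} C_ℓ`, where `C_ℓ` is the number of
connected components of the bipartite graph between factors `π(ℓ)` and `π(ℓ+1)`;
equivalently, `Ā^(r)` has the eigenvalue `−1/(K−1)` with multiplicity at least
`∑_ℓ C_ℓ`. -/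
theorem pairwise_connectivity_necessary (K N : ℕ) (G : Fin K → ℕ)
    (g : Fin N → ∀ k : Fin K, Fin (G k))
    (hK : 2 ≤ K) (hGk : ∀ k, 1 ≤ G k) (hN : 1 ≤ N)
    (hobs : ∀ (k : Fin K) (a : Fin (G k)), ∃ i, g i k = a)
    (π : Equiv.Perm (Fin K)) :
    (∑ l : Fin (K - 1),
        Nat.card (BipGraph K N G g
          (π ⟨l.val, lt_of_lt_of_le l.isLt (Nat.sub_le K 1)⟩)
          (π ⟨l.val + 1, Nat.add_lt_of_lt_sub l.isLt⟩)).ConnectedComponent)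
      ≤ Module.finrank ℝ ↥(LinearMap.ker (Ur K N G g).mulVecLin) ∧
    (∑ l : Fin (K - 1),
        Nat.card (BipGraph K N G g
          (π ⟨l.val, lt_of_lt_of_le l.isLt (Nat.sub_le K 1)⟩)
          (π ⟨l.val + 1, Nat.add_lt_of_lt_sub l.isLt⟩)).ConnectedComponent)
      ≤ Module.finrank ℝ
          ↥(Module.End.eigenspace (Abar K N G g).mulVecLin (-1 / ((K : ℝ) - 1))) := by
  exact ⟨card_le_finrank_ker K N G g π hobs,
    le_trans (card_le_finrank_ker K N G g π hobs)
      (finrank_ker_le_finrank_eigen K N G g hK hobs)⟩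

end Crossed
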